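/- arXiv:2212.07356 — 4 statements merged into one kernel-verified Lean document; each statement's English description precedes it below -/
import Mathlib

section
/- Let d ≥ 1 and 1 ≤ r ≤ d be real numbers, let 0 < μ ≤ L, and let K be a nonempty finite index set with weights p_k ≥ 0 (k ∈ K) summing to 1. For each k ∈ K let F_k : ℝ^n → ℝ be differentiable, L-smooth and μ-strongly convex, and let F_k* = inf F_k (attained). Let F : ℝ^n → ℝ attain its global minimum F* at θ* ∈ ℝ^n. Let ζ1, ζ2 ≥ 0 satisfy |F* − Σ_{k∈K} p_k F_k*| ≤ ζ1 and |F* − Σ_{k∈K} p_k F_k(θ*)| ≤ ζ2, and set A = 2(ζ1 + ζ2). Let 0 < α ≤ 1/(4L), let θ̄ ∈ ℝ^n, and let ḡ = (r/d) Σ_{k∈K} p_k ∇F_k(θ̄). Then ‖θ̄ − θ* − α ḡ‖² ≤ (1 − μ α r / d) ‖θ̄ − θ*‖² + α r A / d. -/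
open RealInnerProductSpace

lemma smooth_descent_aux {E : Type*} [NormedAddCommGroup E] [InnerProductSpace ℝ E] [CompleteSpace E]
    {f : E → ℝ} {L : ℝ} (hL : 0 ≤ L)
    (hdiff : Differentiable ℝ f)
    (hlip : ∀ x y, ‖gradient f x - gradient f y‖ ≤ L * ‖x - y‖) (x y : E) :
    f y ≤ f x + ⟪gradient f x, y - x⟫ + L * ‖y - x‖ ^ 2 := by
  have key : ‖f y - f x - (fderiv ℝ f x) (y - x)‖ ≤ (L * ‖y - x‖) * ‖y - x‖ := by
    apply (convex_segment x y).norm_image_sub_le_of_norm_hasFDerivWithin_le'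
      (f' := fun z => fderiv ℝ f z)
      (fun z _ => (hdiff z).hasFDerivAt.hasFDerivWithinAt)
      ?_ (left_mem_segment ℝ x y) (right_mem_segment ℝ x y)
    rintro z ⟨a, b, ha, hb, hab, rfl⟩
    have hz : a • x + b • y - x = b • (y - x) := by
      have hax : a • x = x - b • x := by
        rw [show a = 1 - b by linarith, sub_smul, one_smul]
      rw [smul_sub, hax]; abel
    have h1 : ‖fderiv ℝ f (a • x + b • y) - fderiv ℝ f x‖
        = ‖gradient f (a • x + b • y) - gradient f x‖ := by
      unfold gradient
      rw [← map_sub, LinearIsometryEquiv.norm_map]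
    rw [h1]
    calc ‖gradient f (a • x + b • y) - gradient f x‖
        ≤ L * ‖a • x + b • y - x‖ := hlip _ _
      _ = L * (b * ‖y - x‖) := by rw [hz, norm_smul, Real.norm_of_nonneg hb]
      _ ≤ L * ‖y - x‖ := by
          apply mul_le_mul_of_nonneg_left _ hL
          nlinarith [norm_nonneg (y - x)]
  have hfd : fderiv ℝ f x = InnerProductSpace.toDual ℝ E (gradient f x) :=
    ((hdiff x).hasGradientAt.hasFDerivAt).fderiv
  have h2 : (fderiv ℝ f x) (y - x) = ⟪gradient f x, y - x⟫ := by
    rw [hfd, InnerProductSpace.toDual_apply_apply]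
  rw [h2] at key
  have h3 := (abs_le.mp key).2
  nlinarith [h3]

lemma grad_sq_le_aux {E : Type*} [NormedAddCommGroup E] [InnerProductSpace ℝ E] [CompleteSpace E]
    {f : E → ℝ} {L : ℝ} (hL : 0 < L)
    (hdiff : Differentiable ℝ f)
    (hlip : ∀ x y, ‖gradient f x - gradient f y‖ ≤ L * ‖x - y‖)
    {m : ℝ} (hm : ∀ x, m ≤ f x) (x : E) :
    ‖gradient f x‖ ^ 2 ≤ 4 * L * (f x - m) := by
  set g := gradient f x with hg
  have h := smooth_descent_aux hL.le hdiff hlip x (x - (1 / (2 * L)) • g)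
  have hyx : x - (1 / (2 * L)) • g - x = -((1 / (2 * L)) • g) := by abel
  rw [hyx] at h
  have hi : ⟪g, -((1 / (2 * L)) • g)⟫ = -((1 / (2 * L)) * ‖g‖ ^ 2) := by
    rw [inner_neg_right, real_inner_smul_right, real_inner_self_eq_norm_sq]
  have hn : ‖-((1 / (2 * L)) • g)‖ ^ 2 = (1 / (2 * L)) ^ 2 * ‖g‖ ^ 2 := by
    rw [norm_neg, norm_smul, mul_pow, Real.norm_eq_abs, sq_abs]
  rw [hi, hn] at h
  have hm' := hm (x - (1 / (2 * L)) • g)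
  have e1 : -((1 / (2 * L)) * ‖g‖ ^ 2) + L * ((1 / (2 * L)) ^ 2 * ‖g‖ ^ 2)
      = -((1 / (4 * L)) * ‖g‖ ^ 2) := by field_simp; ring
  have h4 : (1 / (4 * L)) * ‖g‖ ^ 2 ≤ f x - m := by linarith
  have h5 := mul_le_mul_of_nonneg_left h4 (by positivity : (0:ℝ) ≤ 4 * L)
  have e2 : (4 * L) * ((1 / (4 * L)) * ‖g‖ ^ 2) = ‖g‖ ^ 2 := by field_simp
  linarith [h5, e2.symm.le]
/-- Lemma 1 of the paper: with `ḡ = (r/d) Σ p_k ∇F_k(θ̄)` the expected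
sparsified aggregated gradient, step size `0 < α ≤ 1/(4L)` and heterogeneity
level `A = 2(ζ1 + ζ2)`, one has
`‖θ̄ − θ* − αḡ‖² ≤ (1 − μαr/d)‖θ̄ − θ*‖² + αrA/d`. -/
theorem lemma_one_descent_bound
    {ι : Type*} (n : ℕ) (d r : ℝ) (hd : 1 ≤ d) (hr1 : 1 ≤ r) (hrd : r ≤ d)
    (μ L : ℝ) (hμ : 0 < μ) (hμL : μ ≤ L)
    (K : Finset ι) (hK : K.Nonempty)
    (p : ι → ℝ) (hp : ∀ k ∈ K, 0 ≤ p k) (hsum : ∑ k ∈ K, p k = 1)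
    (Fk : ι → EuclideanSpace ℝ (Fin n) → ℝ)
    (hdiff : ∀ k ∈ K, Differentiable ℝ (Fk k))
    (hsmooth : ∀ k ∈ K, ∀ x y : EuclideanSpace ℝ (Fin n),
      ‖gradient (Fk k) x - gradient (Fk k) y‖ ≤ L * ‖x - y‖)
    (hsc : ∀ k ∈ K, ∀ x y : EuclideanSpace ℝ (Fin n),
      Fk k x ≥ Fk k y + ⟪gradient (Fk k) y, x - y⟫ + (μ / 2) * ‖x - y‖ ^ 2)
    (Fkstar : ι → ℝ)
    (hFk : ∀ k ∈ K, ∃ θ, Fk k θ = Fkstar k ∧ ∀ x, Fkstar k ≤ Fk k x)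
    (F : EuclideanSpace ℝ (Fin n) → ℝ)
    (θstar : EuclideanSpace ℝ (Fin n)) (hmin : ∀ θ, F θstar ≤ F θ)
    (ζ1 ζ2 : ℝ) (hζ1 : 0 ≤ ζ1) (hζ2 : 0 ≤ ζ2)
    (hΓ1 : |F θstar - ∑ k ∈ K, p k * Fkstar k| ≤ ζ1)
    (hΓ2 : |F θstar - ∑ k ∈ K, p k * Fk k θstar| ≤ ζ2)
    (α : ℝ) (hα0 : 0 < α) (hα : α ≤ 1 / (4 * L))
    (θbar : EuclideanSpace ℝ (Fin n)) :
    ‖θbar - θstar - α • ((r / d) • ∑ k ∈ K, p k • gradient (Fk k) θbar)‖ ^ 2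
      ≤ (1 - μ * α * r / d) * ‖θbar - θstar‖ ^ 2
        + α * r * (2 * (ζ1 + ζ2)) / d := by
  have hL : 0 < L := hμ.trans_le hμL
  have hd0 : 0 < d := lt_of_lt_of_le one_pos hd
  set v : EuclideanSpace ℝ (Fin n) := θbar - θstar with hv
  set G : EuclideanSpace ℝ (Fin n) := ∑ k ∈ K, p k • gradient (Fk k) θbar with hG
  set c : ℝ := α * (r / d) with hc
  have hc0 : 0 < c := by positivity
  -- step size bound
  have h4La : α * (4 * L) ≤ 1 := by
    rw [← le_div_iff₀ (by positivity)]; exact hα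
  have hrd1 : r / d ≤ 1 := by rw [div_le_one hd0]; exact hrd
  have hrd0 : 0 ≤ r / d := by positivity
  have hc1 : 4 * L * c ≤ 1 := by
    have := mul_le_mul_of_nonneg_right h4La hrd0
    calc 4 * L * c = (α * (4 * L)) * (r / d) := by rw [hc]; ring
      _ ≤ 1 * (r / d) := this
      _ ≤ 1 := by linarith
  -- rewrite LHS
  have hL1 : θbar - θstar - α • ((r / d) • G) = v - c • G := by
    rw [smul_smul, hv, hc]
  rw [hL1, norm_sub_sq_real, real_inner_smul_right, norm_smul, mul_pow,
    Real.norm_eq_abs, sq_abs]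
  -- key sums
  set SB : ℝ := ∑ k ∈ K, p k * (Fk k θbar - Fkstar k) with hSBdef
  set SC : ℝ := ∑ k ∈ K, p k * (Fk k θstar - Fkstar k) with hSCdef
  have hSB : 0 ≤ SB := Finset.sum_nonneg fun k hk => by
    obtain ⟨θ, _, hlow⟩ := hFk k hk
    exact mul_nonneg (hp k hk) (by linarith [hlow θbar])
  have hSC : SC ≤ ζ1 + ζ2 := by
    have e0 : SC = (∑ k ∈ K, p k * Fk k θstar) - ∑ k ∈ K, p k * Fkstar k := by
      rw [hSCdef, ← Finset.sum_sub_distrib]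
      exact Finset.sum_congr rfl fun k _ => by ring
    have e : SC = (F θstar - ∑ k ∈ K, p k * Fkstar k)
        - (F θstar - ∑ k ∈ K, p k * Fk k θstar) := by rw [e0]; ring
    have h1 := (abs_le.mp hΓ1).2
    have h2 := (abs_le.mp hΓ2).1
    linarith [e.le, e.ge]
  -- inner product lower bound
  have hinner : (SB - SC) + (μ / 2) * ‖v‖ ^ 2 ≤ ⟪v, G⟫ := by
    have hGv : ⟪v, G⟫ = ∑ k ∈ K, p k * ⟪gradient (Fk k) θbar, v⟫ := by
      rw [hG, real_inner_comm, sum_inner]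
      exact Finset.sum_congr rfl fun k _ => real_inner_smul_left _ _ _
    have hterm : ∀ k ∈ K,
        p k * (Fk k θbar - Fk k θstar) + p k * ((μ / 2) * ‖v‖ ^ 2)
          ≤ p k * ⟪gradient (Fk k) θbar, v⟫ := by
      intro k hk
      have h := hsc k hk θstar θbar
      have hst : θstar - θbar = -v := by rw [hv]; abel
      rw [hst, inner_neg_right, norm_neg] at h
      have hpk := hp k hk
      have h1 : Fk k θbar - Fk k θstar + (μ / 2) * ‖v‖ ^ 2
          ≤ ⟪gradient (Fk k) θbar, v⟫ := by linarith
      have h2 := mul_le_mul_of_nonneg_left h1 hpk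
      rw [mul_add] at h2
      exact h2
    have hsum2 : ∑ k ∈ K, (p k * (Fk k θbar - Fk k θstar) + p k * ((μ / 2) * ‖v‖ ^ 2))
        ≤ ∑ k ∈ K, p k * ⟪gradient (Fk k) θbar, v⟫ := Finset.sum_le_sum hterm
    have e1 : ∑ k ∈ K, (p k * (Fk k θbar - Fk k θstar) + p k * ((μ / 2) * ‖v‖ ^ 2))
        = (SB - SC) + (μ / 2) * ‖v‖ ^ 2 := by
      rw [Finset.sum_add_distrib, ← Finset.sum_mul, hsum, one_mul,
        hSBdef, hSCdef, ← Finset.sum_sub_distrib]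
      congr 1
      exact Finset.sum_congr rfl fun k _ => by ring
    rw [hGv, ← e1]; exact hsum2
  -- gradient norm bound
  have hGsq : ‖G‖ ^ 2 ≤ 4 * L * SB := by
    have hjen : ‖G‖ ^ 2 ≤ ∑ k ∈ K, p k * ‖gradient (Fk k) θbar‖ ^ 2 := by
      have h1 : ‖G‖ ≤ ∑ k ∈ K, p k * ‖gradient (Fk k) θbar‖ := by
        rw [hG]
        refine (norm_sum_le _ _).trans_eq ?_
        exact Finset.sum_congr rfl fun k hk => by
          rw [norm_smul, Real.norm_of_nonneg (hp k hk)]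
      have h2 : ‖G‖ ^ 2 ≤ (∑ k ∈ K, p k * ‖gradient (Fk k) θbar‖) ^ 2 :=
        pow_le_pow_left₀ (norm_nonneg _) h1 2
      have h3 := Finset.sum_mul_sq_le_sq_mul_sq K (fun k => Real.sqrt (p k))
        (fun k => Real.sqrt (p k) * ‖gradient (Fk k) θbar‖)
      have e2 : ∑ k ∈ K, Real.sqrt (p k) * (Real.sqrt (p k) * ‖gradient (Fk k) θbar‖)
          = ∑ k ∈ K, p k * ‖gradient (Fk k) θbar‖ :=
        Finset.sum_congr rfl fun k hk => by
          rw [← mul_assoc, Real.mul_self_sqrt (hp k hk)]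
      have e3 : ∑ k ∈ K, Real.sqrt (p k) ^ 2 = 1 := by
        rw [← hsum]
        exact Finset.sum_congr rfl fun k hk => Real.sq_sqrt (hp k hk)
      have e4 : ∑ k ∈ K, (Real.sqrt (p k) * ‖gradient (Fk k) θbar‖) ^ 2
          = ∑ k ∈ K, p k * ‖gradient (Fk k) θbar‖ ^ 2 :=
        Finset.sum_congr rfl fun k hk => by
          rw [mul_pow, Real.sq_sqrt (hp k hk)]
      rw [e2, e3, e4, one_mul] at h3
      linarith
    refine hjen.trans ?_
    have hterm : ∀ k ∈ K, p k * ‖gradient (Fk k) θbar‖ ^ 2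
        ≤ p k * (4 * L * (Fk k θbar - Fkstar k)) := by
      intro k hk
      obtain ⟨θ, _, hlow⟩ := hFk k hk
      exact mul_le_mul_of_nonneg_left
        (grad_sq_le_aux hL (hdiff k hk) (hsmooth k hk) hlow θbar) (hp k hk)
    refine (Finset.sum_le_sum hterm).trans_eq ?_
    rw [hSBdef, Finset.mul_sum]
    exact Finset.sum_congr rfl fun k _ => by ring
  -- conclude
  have t2 : c ^ 2 * ‖G‖ ^ 2 ≤ c ^ 2 * (4 * L * SB) :=
    mul_le_mul_of_nonneg_left hGsq (sq_nonneg c)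
  have t3 : c ^ 2 * (4 * L * SB) ≤ c * SB := by
    linarith [mul_le_mul_of_nonneg_right hc1 (mul_nonneg hc0.le hSB)]
  have t5 : 0 ≤ c * SB := mul_nonneg hc0.le hSB
  have hceq : μ * α * r / d = μ * c := by rw [hc]; ring
  have hceq2 : α * r * (2 * (ζ1 + ζ2)) / d = c * (2 * (ζ1 + ζ2)) := by rw [hc]; ring
  rw [hceq, hceq2]
  have u1 := mul_le_mul_of_nonneg_left hinner (by linarith : (0:ℝ) ≤ 2 * c)
  have u2 := mul_le_mul_of_nonneg_left hSC (by linarith : (0:ℝ) ≤ 2 * c)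
  linarith [u1, u2, t2, t3, t5]
end

section
/- Let 0 < μ ≤ L, let K be a nonempty finite index set with weights p_k ≥ 0 (k ∈ K) summing to 1, and for each k ∈ K let F_k : ℝ^n → ℝ be differentiable with L-Lipschitz gradient and μ-strongly convex, attaining its minimum F_k* at θ_k* ∈ ℝ^n. Let F : ℝ^n → ℝ attain its global minimum F* at θ* ∈ ℝ^n, and let ζ1, ζ2 ≥ 0 satisfy |F* − Σ_{k∈K} p_k F_k*| ≤ ζ1 and |F* − Σ_{k∈K} p_k F_k(θ*)| ≤ ζ2; set A = 2(ζ1 + ζ2). Let C1, C2 ≥ 0, let θ ∈ ℝ^n, and suppose g_k ≥ 0 (k ∈ K) are real numbers with g_k ≤ C1 + C2 ‖∇F_k(θ)‖² for every k. Then Σ_{k∈K} p_k g_k ≤ C1 + 2 L² C2 ( ‖θ − θ*‖² + A/μ ). -/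
open RealInnerProductSpace

set_option maxHeartbeats 1000000 in
/-- Deterministic core of Lemma 2 of the paper: if each `g_k` (the conditional
second moment of the stochastic gradient of device `k`) satisfies
`g_k ≤ C1 + C2‖∇F_k(θ)‖²`, then the weighted sum is bounded as
`Σ p_k g_k ≤ C1 + 2L²C2(‖θ − θ*‖² + A/μ)` with `A = 2(ζ1 + ζ2)`. -/
theorem weighted_second_moment_bound
    {ι : Type*} (n : ℕ) (μ L : ℝ) (hμ : 0 < μ) (hμL : μ ≤ L)
    (K : Finset ι) (hK : K.Nonempty)
    (p : ι → ℝ) (hp : ∀ k ∈ K, 0 ≤ p k) (hsum : ∑ k ∈ K, p k = 1)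
    (Fk : ι → EuclideanSpace ℝ (Fin n) → ℝ)
    (hdiff : ∀ k ∈ K, Differentiable ℝ (Fk k))
    (hsmooth : ∀ k ∈ K, ∀ x y : EuclideanSpace ℝ (Fin n),
      ‖gradient (Fk k) x - gradient (Fk k) y‖ ≤ L * ‖x - y‖)
    (hsc : ∀ k ∈ K, ∀ x y : EuclideanSpace ℝ (Fin n),
      Fk k x ≥ Fk k y + ⟪gradient (Fk k) y, x - y⟫ + (μ / 2) * ‖x - y‖ ^ 2)
    (θk : ι → EuclideanSpace ℝ (Fin n))
    (hθk : ∀ k ∈ K, ∀ x, Fk k (θk k) ≤ Fk k x)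
    (F : EuclideanSpace ℝ (Fin n) → ℝ)
    (θstar : EuclideanSpace ℝ (Fin n)) (hmin : ∀ θ, F θstar ≤ F θ)
    (ζ1 ζ2 : ℝ) (hζ1 : 0 ≤ ζ1) (hζ2 : 0 ≤ ζ2)
    (hΓ1 : |F θstar - ∑ k ∈ K, p k * Fk k (θk k)| ≤ ζ1)
    (hΓ2 : |F θstar - ∑ k ∈ K, p k * Fk k θstar| ≤ ζ2)
    (C1 C2 : ℝ) (hC1 : 0 ≤ C1) (hC2 : 0 ≤ C2)
    (θ : EuclideanSpace ℝ (Fin n))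
    (g : ι → ℝ) (hg0 : ∀ k ∈ K, 0 ≤ g k)
    (hg : ∀ k ∈ K, g k ≤ C1 + C2 * ‖gradient (Fk k) θ‖ ^ 2) :
    ∑ k ∈ K, p k * g k
      ≤ C1 + 2 * L ^ 2 * C2 * (‖θ - θstar‖ ^ 2 + 2 * (ζ1 + ζ2) / μ) := by
  have hL : 0 < L := lt_of_lt_of_le hμ hμL
  -- gradient vanishes at each local minimizer θk
  have hgrad0 : ∀ k ∈ K, gradient (Fk k) (θk k) = 0 := by
    intro k hk
    have hloc : IsLocalMin (Fk k) (θk k) :=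
      Filter.Eventually.of_forall (hθk k hk)
    rw [gradient, hloc.fderiv_eq_zero, map_zero]
  -- per-k bound on gradient norm squared
  have key : ∀ k ∈ K, ‖gradient (Fk k) θ‖ ^ 2
      ≤ 2 * L ^ 2 * ‖θ - θstar‖ ^ 2
        + (4 * L ^ 2 / μ) * (Fk k θstar - Fk k (θk k)) := by
    intro k hk
    -- distance to minimizer bound via strong convexity
    have hsc1 := hsc k hk θstar (θk k)
    rw [hgrad0 k hk] at hsc1
    simp only [inner_zero_left] at hsc1
    -- ‖θ* - θk‖² ≤ (2/μ)(Fk θ* - Fk θk)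
    have hdist : ‖θstar - θk k‖ ^ 2 ≤ (2 / μ) * (Fk k θstar - Fk k (θk k)) := by
      rw [ge_iff_le] at hsc1
      rw [div_mul_eq_mul_div, le_div_iff₀ hμ]
      nlinarith
    have h1 : ‖gradient (Fk k) θstar‖ ≤ L * ‖θstar - θk k‖ := by
      have := hsmooth k hk θstar (θk k)
      rwa [hgrad0 k hk, sub_zero] at this
    have h2 : ‖gradient (Fk k) θ - gradient (Fk k) θstar‖ ≤ L * ‖θ - θstar‖ :=
      hsmooth k hk θ θstar
    have h3 : ‖gradient (Fk k) θ‖ ≤ ‖gradient (Fk k) θ - gradient (Fk k) θstar‖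
        + ‖gradient (Fk k) θstar‖ := by
      calc ‖gradient (Fk k) θ‖
          = ‖(gradient (Fk k) θ - gradient (Fk k) θstar) + gradient (Fk k) θstar‖ := by
            rw [sub_add_cancel]
        _ ≤ _ := norm_add_le _ _
    have hA0 : (0:ℝ) ≤ ‖gradient (Fk k) θ - gradient (Fk k) θstar‖ := norm_nonneg _
    have hB0 : (0:ℝ) ≤ ‖gradient (Fk k) θstar‖ := norm_nonneg _
    have hC0 : (0:ℝ) ≤ ‖gradient (Fk k) θ‖ := norm_nonneg _
    have hd0 : (0:ℝ) ≤ ‖θstar - θk k‖ := norm_nonneg _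
    have ht0 : (0:ℝ) ≤ ‖θ - θstar‖ := norm_nonneg _
    have hsq : ‖gradient (Fk k) θ‖ ^ 2 ≤
        2 * ‖gradient (Fk k) θ - gradient (Fk k) θstar‖ ^ 2
          + 2 * ‖gradient (Fk k) θstar‖ ^ 2 := by
      nlinarith [sq_nonneg (‖gradient (Fk k) θ - gradient (Fk k) θstar‖
        - ‖gradient (Fk k) θstar‖)]
    have h1sq : ‖gradient (Fk k) θstar‖ ^ 2 ≤ L ^ 2 * ‖θstar - θk k‖ ^ 2 := by
      nlinarith
    have h2sq : ‖gradient (Fk k) θ - gradient (Fk k) θstar‖ ^ 2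
        ≤ L ^ 2 * ‖θ - θstar‖ ^ 2 := by nlinarith
    have hL2 : (0:ℝ) ≤ L ^ 2 := sq_nonneg L
    calc ‖gradient (Fk k) θ‖ ^ 2
        ≤ 2 * ‖gradient (Fk k) θ - gradient (Fk k) θstar‖ ^ 2
          + 2 * ‖gradient (Fk k) θstar‖ ^ 2 := hsq
      _ ≤ 2 * (L ^ 2 * ‖θ - θstar‖ ^ 2) + 2 * (L ^ 2 * ‖θstar - θk k‖ ^ 2) := by
          nlinarith
      _ ≤ 2 * L ^ 2 * ‖θ - θstar‖ ^ 2
          + (4 * L ^ 2 / μ) * (Fk k θstar - Fk k (θk k)) := by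
          have h := mul_le_mul_of_nonneg_left hdist hL2
          have heq : (4 * L ^ 2 / μ) * (Fk k θstar - Fk k (θk k))
              = 2 * (L ^ 2 * (2 / μ * (Fk k θstar - Fk k (θk k)))) := by
            ring
          linarith
  -- sum of weighted gaps bounded by ζ1 + ζ2
  have hsumD : ∑ k ∈ K, p k * (Fk k θstar - Fk k (θk k)) ≤ ζ1 + ζ2 := by
    have e1 := abs_le.mp hΓ1
    have e2 := abs_le.mp hΓ2
    have : ∑ k ∈ K, p k * (Fk k θstar - Fk k (θk k))
        = (∑ k ∈ K, p k * Fk k θstar) - ∑ k ∈ K, p k * Fk k (θk k) := by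
      rw [← Finset.sum_sub_distrib]; exact Finset.sum_congr rfl fun k _ => by ring
    rw [this]; linarith [e1.1, e1.2, e2.1, e2.2]
  -- combine
  have step : ∑ k ∈ K, p k * g k
      ≤ ∑ k ∈ K, p k * (C1 + C2 * (2 * L ^ 2 * ‖θ - θstar‖ ^ 2
          + (4 * L ^ 2 / μ) * (Fk k θstar - Fk k (θk k)))) := by
    apply Finset.sum_le_sum
    intro k hk
    apply mul_le_mul_of_nonneg_left _ (hp k hk)
    calc g k ≤ C1 + C2 * ‖gradient (Fk k) θ‖ ^ 2 := hg k hk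
      _ ≤ _ := by
          have h := mul_le_mul_of_nonneg_left (key k hk) hC2
          linarith
  have expand : ∑ k ∈ K, p k * (C1 + C2 * (2 * L ^ 2 * ‖θ - θstar‖ ^ 2
          + (4 * L ^ 2 / μ) * (Fk k θstar - Fk k (θk k))))
      = C1 + 2 * L ^ 2 * C2 * ‖θ - θstar‖ ^ 2
        + (C2 * (4 * L ^ 2 / μ)) * ∑ k ∈ K, p k * (Fk k θstar - Fk k (θk k)) := by
    rw [Finset.mul_sum]
    have : ∀ k ∈ K, p k * (C1 + C2 * (2 * L ^ 2 * ‖θ - θstar‖ ^ 2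
          + (4 * L ^ 2 / μ) * (Fk k θstar - Fk k (θk k))))
        = p k * (C1 + 2 * L ^ 2 * C2 * ‖θ - θstar‖ ^ 2)
          + C2 * (4 * L ^ 2 / μ) * (p k * (Fk k θstar - Fk k (θk k))) := by
      intro k _; ring
    rw [Finset.sum_congr rfl this, Finset.sum_add_distrib, ← Finset.sum_mul, hsum, one_mul]
  have hcoef : (0:ℝ) ≤ C2 * (4 * L ^ 2 / μ) := by positivity
  have final := mul_le_mul_of_nonneg_left hsumD hcoef
  have goal_eq : C1 + 2 * L ^ 2 * C2 * (‖θ - θstar‖ ^ 2 + 2 * (ζ1 + ζ2) / μ)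
      = C1 + 2 * L ^ 2 * C2 * ‖θ - θstar‖ ^ 2 + (C2 * (4 * L ^ 2 / μ)) * (ζ1 + ζ2) := by
    field_simp; ring
  rw [goal_eq]
  calc ∑ k ∈ K, p k * g k ≤ _ := step
    _ = _ := expand
    _ ≤ _ := by linarith
end

section
/- Let μ > 0, let K be a nonempty finite index set with weights p_k ≥ 0 (k ∈ K) summing to 1, and for each k ∈ K let F_k : ℝ^n → ℝ be differentiable and μ-strongly convex, attaining its minimum at θ_k* ∈ ℝ^n. Let F : ℝ^n → ℝ attain its global minimum F* at θ* ∈ ℝ^n, and let ζ1, ζ2 ≥ 0 satisfy |F* − Σ_{k∈K} p_k F_k(θ_k*)| ≤ ζ1 and |F* − Σ_{k∈K} p_k F_k(θ*)| ≤ ζ2; set A = 2(ζ1 + ζ2). Then for every θ ∈ ℝ^n, Σ_{k∈K} p_k ‖θ − θ_k*‖² ≤ 2 ‖θ − θ*‖² + 2A/μ. -/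
open RealInnerProductSpace

/-- Inequality (proofLm2_1) of the paper: for `μ`-strongly convex local losses
`F_k` with minimizers `θ_k*`, heterogeneity bounds `ζ1, ζ2`, and
`A = 2(ζ1 + ζ2)`, one has `Σ p_k ‖θ − θ_k*‖² ≤ 2‖θ − θ*‖² + 2A/μ`. -/
theorem weighted_sq_dist_to_local_minimizers
    {ι : Type*} (n : ℕ) (μ : ℝ) (hμ : 0 < μ)
    (K : Finset ι) (hK : K.Nonempty)
    (p : ι → ℝ) (hp : ∀ k ∈ K, 0 ≤ p k) (hsum : ∑ k ∈ K, p k = 1)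
    (Fk : ι → EuclideanSpace ℝ (Fin n) → ℝ)
    (hdiff : ∀ k ∈ K, Differentiable ℝ (Fk k))
    (hsc : ∀ k ∈ K, ∀ x y : EuclideanSpace ℝ (Fin n),
      Fk k x ≥ Fk k y + ⟪gradient (Fk k) y, x - y⟫ + (μ / 2) * ‖x - y‖ ^ 2)
    (θk : ι → EuclideanSpace ℝ (Fin n))
    (hθk : ∀ k ∈ K, ∀ x, Fk k (θk k) ≤ Fk k x)
    (F : EuclideanSpace ℝ (Fin n) → ℝ)
    (θstar : EuclideanSpace ℝ (Fin n)) (hmin : ∀ θ, F θstar ≤ F θ)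
    (ζ1 ζ2 : ℝ) (hζ1 : 0 ≤ ζ1) (hζ2 : 0 ≤ ζ2)
    (hΓ1 : |F θstar - ∑ k ∈ K, p k * Fk k (θk k)| ≤ ζ1)
    (hΓ2 : |F θstar - ∑ k ∈ K, p k * Fk k θstar| ≤ ζ2) :
    ∀ θ : EuclideanSpace ℝ (Fin n),
      ∑ k ∈ K, p k * ‖θ - θk k‖ ^ 2
        ≤ 2 * ‖θ - θstar‖ ^ 2 + 2 * (2 * (ζ1 + ζ2)) / μ := by
  intro θ
  -- gradient vanishes at the minimizer
  have hgrad : ∀ k ∈ K, gradient (Fk k) (θk k) = 0 := by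
    intro k hk
    have hloc : IsLocalMin (Fk k) (θk k) :=
      IsMinOn.isLocalMin (s := Set.univ) (fun x _ => hθk k hk x) Filter.univ_mem
    have hf : fderiv ℝ (Fk k) (θk k) = 0 := hloc.fderiv_eq_zero
    simp [gradient, hf]
  -- strong convexity bound on squared distance to minimizer
  have hsq : ∀ k ∈ K, ∀ x : EuclideanSpace ℝ (Fin n),
      μ / 2 * ‖x - θk k‖ ^ 2 ≤ Fk k x - Fk k (θk k) := by
    intro k hk x
    have := hsc k hk x (θk k)
    rw [hgrad k hk] at this
    simp only [inner_zero_left] at this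
    linarith
  -- basic inequality ‖θ - θk‖² ≤ 2‖θ - θ*‖² + 2‖θ* - θk‖²
  have hbasic : ∀ k ∈ K,
      ‖θ - θk k‖ ^ 2 ≤ 2 * ‖θ - θstar‖ ^ 2 + 2 * ‖θstar - θk k‖ ^ 2 := by
    intro k hk
    have htri : ‖θ - θk k‖ ≤ ‖θ - θstar‖ + ‖θstar - θk k‖ := by
      have := norm_add_le (θ - θstar) (θstar - θk k)
      simpa [sub_add_sub_cancel] using this
    nlinarith [pow_le_pow_left₀ (norm_nonneg (θ - θk k)) htri 2,
      sq_nonneg (‖θ - θstar‖ - ‖θstar - θk k‖)]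
  -- pointwise: p k * ‖θ - θk k‖² ≤ p k * (2‖θ-θ*‖² + (4/μ)(Fk θ* - Fk θk))
  have hpt : ∀ k ∈ K, p k * ‖θ - θk k‖ ^ 2 ≤
      p k * (2 * ‖θ - θstar‖ ^ 2 + 4 / μ * (Fk k θstar - Fk k (θk k))) := by
    intro k hk
    refine mul_le_mul_of_nonneg_left ?_ (hp k hk)
    have h1 := hbasic k hk
    have h2 := hsq k hk θstar
    have h3 : 2 * ‖θstar - θk k‖ ^ 2 ≤ 4 / μ * (Fk k θstar - Fk k (θk k)) := by
      rw [div_mul_eq_mul_div, le_div_iff₀ hμ]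
      nlinarith
    linarith
  calc ∑ k ∈ K, p k * ‖θ - θk k‖ ^ 2
      ≤ ∑ k ∈ K, p k * (2 * ‖θ - θstar‖ ^ 2 + 4 / μ * (Fk k θstar - Fk k (θk k))) :=
        Finset.sum_le_sum hpt
    _ = 2 * ‖θ - θstar‖ ^ 2 + 4 / μ *
        ((∑ k ∈ K, p k * Fk k θstar) - ∑ k ∈ K, p k * Fk k (θk k)) := by
        have hc : ∀ k ∈ K,
            p k * (2 * ‖θ - θstar‖ ^ 2 + 4 / μ * (Fk k θstar - Fk k (θk k)))
            = 2 * ‖θ - θstar‖ ^ 2 * p k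
              + (4 / μ * (p k * Fk k θstar) - 4 / μ * (p k * Fk k (θk k))) :=
          fun k _ => by ring
        rw [Finset.sum_congr rfl hc, Finset.sum_add_distrib, Finset.sum_sub_distrib,
          ← Finset.mul_sum, ← Finset.mul_sum, ← Finset.mul_sum, hsum]
        ring
    _ ≤ 2 * ‖θ - θstar‖ ^ 2 + 4 / μ * (ζ1 + ζ2) := by
        have h1 := abs_le.mp hΓ1
        have h2 := abs_le.mp hΓ2
        have hμ' : (0:ℝ) ≤ 4 / μ := by positivity
        nlinarith [mul_le_mul_of_nonneg_left
          (show (∑ k ∈ K, p k * Fk k θstar) - ∑ k ∈ K, p k * Fk k (θk k) ≤ ζ1 + ζ2 by linarith) hμ']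
    _ = 2 * ‖θ - θstar‖ ^ 2 + 2 * (2 * (ζ1 + ζ2)) / μ := by ring
end

section
/- Let ν be a positive integer, let d ≥ 1 and 0 ≤ r ≤ d be integers, and let ũ ∈ ℝ^d be a nonzero vector with at most r nonzero components; write s = ‖ũ‖₂ > 0. For each coordinate i ∈ {1,...,d}, let X_i be a real random variable which equals 0 almost surely if ũ_i = 0, and otherwise takes the value s · sign(ũ_i) · (z_i+1)/ν with probability p_i = ν|ũ_i|/s − z_i and the value s · sign(ũ_i) · z_i/ν with probability 1 − p_i, where z_i = ⌊ν|ũ_i|/s⌋. Then the random vector X = (X_1,...,X_d) satisfies E[X] = ũ and E[‖X − ũ‖₂²] = Σ_{i=1}^d E[(X_i − ũ_i)²] ≤ r s²/(4ν²). -/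
open MeasureTheory

lemma rq_sign_mul_abs (x : ℝ) : Real.sign x * |x| = x := by
  rcases lt_trichotomy x 0 with h | h | h
  · rw [Real.sign_of_neg h, abs_of_neg h]; ring
  · simp [h]
  · rw [Real.sign_of_pos h, abs_of_pos h]; ring

lemma rq_integrable_dirac {g : ℝ → ℝ} (a : ℝ) :
    Integrable g (Measure.dirac a) := by
  have h : g =ᵐ[Measure.dirac a] fun _ => g a := by
    rw [Filter.EventuallyEq, ae_dirac_eq]
    exact Filter.eventually_pure.2 rfl
  exact (integrable_const (g a)).congr h.symm

lemma rq_twopoint {g : ℝ → ℝ} {p : ℝ} (hp0 : 0 ≤ p) (hp1 : p ≤ 1)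
    (a b : ℝ) :
    Integrable g (ENNReal.ofReal p • Measure.dirac a + ENNReal.ofReal (1 - p) • Measure.dirac b) ∧
    ∫ x, g x ∂(ENNReal.ofReal p • Measure.dirac a + ENNReal.ofReal (1 - p) • Measure.dirac b)
      = p * g a + (1 - p) * g b := by
  have h1 : Integrable g (ENNReal.ofReal p • Measure.dirac a) :=
    (rq_integrable_dirac a).smul_measure ENNReal.ofReal_ne_top
  have h2 : Integrable g (ENNReal.ofReal (1 - p) • Measure.dirac b) :=
    (rq_integrable_dirac b).smul_measure ENNReal.ofReal_ne_top
  refine ⟨h1.add_measure h2, ?_⟩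
  rw [integral_add_measure h1 h2, integral_smul_measure, integral_smul_measure,
    integral_dirac, integral_dirac, ENNReal.toReal_ofReal hp0,
    ENNReal.toReal_ofReal (by linarith)]
  simp [smul_eq_mul]

lemma rq_decomp {d : ℕ} (x : EuclideanSpace ℝ (Fin d)) :
    ∑ i, x i • EuclideanSpace.single i (1 : ℝ) = x := by
  ext j
  have h : (∑ i, x i • EuclideanSpace.single i (1 : ℝ)) j
      = ∑ i, (x i • EuclideanSpace.single i (1 : ℝ)) j :=
    by rw [WithLp.ofLp_sum, Finset.sum_apply]
  rw [h]
  simp [EuclideanSpace.single_apply]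

lemma rq_coord_core {Ω : Type*} [MeasurableSpace Ω] (μ : Measure Ω)
    (Y : Ω → ℝ) (hY : Measurable Y) {p a b : ℝ} (hp0 : 0 ≤ p) (hp1 : p ≤ 1)
    (hlaw : μ.map Y
      = ENNReal.ofReal p • Measure.dirac a + ENNReal.ofReal (1 - p) • Measure.dirac b)
    (g : ℝ → ℝ) (hg : Measurable g) :
    Integrable (fun ω => g (Y ω)) μ ∧ ∫ ω, g (Y ω) ∂μ = p * g a + (1 - p) * g b := by
  obtain ⟨hI, hE⟩ := rq_twopoint (g := g) hp0 hp1 a b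
  rw [← hlaw] at hI hE
  refine ⟨(integrable_map_measure hg.aestronglyMeasurable hY.aemeasurable).mp hI, ?_⟩
  rw [← integral_map hY.aemeasurable hg.aestronglyMeasurable]
  exact hE

lemma rq_mean_alg {ν s m w zr v : ℝ} (hν : ν ≠ 0) (hs : s ≠ 0) (hwm : w * m = v) :
    (ν * m / s - zr) * (s * w * ((zr + 1) / ν))
      + (1 - (ν * m / s - zr)) * (s * w * (zr / ν)) = v := by
  subst hwm; field_simp; ring

lemma rq_var_alg {ν s m w zr v : ℝ} (hν : 0 < ν) (hs : 0 < s) (hw : w ^ 2 = 1)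
    (hwm : w * m = v) (h1 : zr ≤ ν * m / s) (h2 : ν * m / s < zr + 1) :
    (ν * m / s - zr) * (s * w * ((zr + 1) / ν) - v) ^ 2
      + (1 - (ν * m / s - zr)) * (s * w * (zr / ν) - v) ^ 2 ≤ s ^ 2 / (4 * ν ^ 2) := by
  subst hwm
  have hνne : ν ≠ 0 := hν.ne'
  have hsne : s ≠ 0 := hs.ne'
  have ha' : s * w * ((zr + 1) / ν) - w * m = s * w * ((1 - (ν * m / s - zr)) / ν) := by
    field_simp; ring
  have hb' : s * w * (zr / ν) - w * m = -(s * w * ((ν * m / s - zr) / ν)) := by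
    field_simp; ring
  rw [ha', hb']
  have hp0 : 0 ≤ ν * m / s - zr := by linarith
  have hp1 : ν * m / s - zr ≤ 1 := by linarith
  generalize hq : ν * m / s - zr = p at hp0 hp1 ⊢
  have heq : p * (s * w * ((1 - p) / ν)) ^ 2 + (1 - p) * (-(s * w * (p / ν))) ^ 2
      = s ^ 2 / ν ^ 2 * (p * (1 - p)) := by
    have h11 : (w - 1) * (w + 1) = 0 := by nlinarith
    rcases mul_eq_zero.mp h11 with h | h
    · have hw1 : w = 1 := by linarith
      subst hw1; field_simp; ring
    · have hw1 : w = -1 := by linarith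
      subst hw1; field_simp; ring
  rw [heq]
  have hple : p * (1 - p) ≤ 1 / 4 := by nlinarith [sq_nonneg (2 * p - 1)]
  calc s ^ 2 / ν ^ 2 * (p * (1 - p))
      ≤ s ^ 2 / ν ^ 2 * (1 / 4) := mul_le_mul_of_nonneg_left hple (by positivity)
    _ = s ^ 2 / (4 * ν ^ 2) := by ring

lemma rq_coord {ν : ℕ} (hν : 0 < ν) {s v : ℝ} (hs : 0 < s) (hv : v ≠ 0)
    {Ω : Type*} [MeasurableSpace Ω] (μ : Measure Ω)
    (Y : Ω → ℝ) (hY : Measurable Y)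
    (hlaw : μ.map Y
      = ENNReal.ofReal ((ν : ℝ) * |v| / s - ⌊(ν : ℝ) * |v| / s⌋)
          • Measure.dirac (s * Real.sign v * ((⌊(ν : ℝ) * |v| / s⌋ + 1) / ν))
        + ENNReal.ofReal (1 - ((ν : ℝ) * |v| / s - ⌊(ν : ℝ) * |v| / s⌋))
          • Measure.dirac (s * Real.sign v * (⌊(ν : ℝ) * |v| / s⌋ / ν))) :
    Integrable Y μ ∧ (∫ ω, Y ω ∂μ) = v ∧
    Integrable (fun ω => (Y ω - v) ^ 2) μ ∧
    (∫ ω, (Y ω - v) ^ 2 ∂μ) ≤ s ^ 2 / (4 * (ν : ℝ) ^ 2) := by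
  have hz1 : ((⌊(ν : ℝ) * |v| / s⌋ : ℤ) : ℝ) ≤ (ν : ℝ) * |v| / s := Int.floor_le _
  have hz2 : (ν : ℝ) * |v| / s < ((⌊(ν : ℝ) * |v| / s⌋ : ℤ) : ℝ) + 1 := Int.lt_floor_add_one _
  have hp0 : (0 : ℝ) ≤ (ν : ℝ) * |v| / s - ⌊(ν : ℝ) * |v| / s⌋ := by linarith
  have hp1 : (ν : ℝ) * |v| / s - ⌊(ν : ℝ) * |v| / s⌋ ≤ 1 := by linarith
  have hsne : s ≠ 0 := hs.ne'
  have hνR : (0 : ℝ) < ν := by exact_mod_cast hν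
  have hνne : (ν : ℝ) ≠ 0 := hνR.ne'
  have hsg2 : Real.sign v ^ 2 = 1 := by
    rcases Real.sign_apply_eq_of_ne_zero v hv with h | h <;> rw [h] <;> norm_num
  have habs : Real.sign v * |v| = v := rq_sign_mul_abs v
  obtain ⟨hImean, hmean⟩ :=
    rq_coord_core μ Y hY hp0 hp1 hlaw (fun x => x) measurable_id
  obtain ⟨hIvar, hvar⟩ := rq_coord_core μ Y hY hp0 hp1 hlaw (fun x => (x - v) ^ 2)
    ((measurable_id.sub measurable_const).pow_const 2)
  refine ⟨hImean, ?_, hIvar, ?_⟩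
  · rw [hmean]
    exact rq_mean_alg hνne hsne habs
  · rw [hvar]
    exact rq_var_alg hνR hs hsg2 habs hz1 hz2

/-- Unbiasedness and bounded variance of the `ν`-level random quantizer applied
componentwise to a sparsified vector `ũ` with at most `r` nonzero entries and
norm `s = ‖ũ‖₂`: `E[X] = ũ` and
`E[‖X − ũ‖₂²] = Σᵢ E[(Xᵢ − ũᵢ)²] ≤ r s²/(4ν²)`. -/
theorem random_quantizer_vector_unbiased_and_variance
    (ν : ℕ) (hν : 0 < ν) (d r : ℕ) (hd : 1 ≤ d) (hrd : r ≤ d)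
    (u : EuclideanSpace ℝ (Fin d)) (hu : u ≠ 0)
    (hsparse : (Finset.univ.filter (fun i => u i ≠ 0)).card ≤ r)
    {Ω : Type*} [MeasurableSpace Ω] (μ : Measure Ω) [IsProbabilityMeasure μ]
    (X : Ω → EuclideanSpace ℝ (Fin d)) (hX : Measurable X)
    (hzero : ∀ i : Fin d, u i = 0 → ∀ᵐ ω ∂μ, X ω i = 0)
    (hlaw : ∀ i : Fin d, u i ≠ 0 →
      Measure.map (fun ω => X ω i) μ =
        ENNReal.ofReal ((ν : ℝ) * |u i| / ‖u‖ - ⌊(ν : ℝ) * |u i| / ‖u‖⌋)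
            • Measure.dirac
              (‖u‖ * Real.sign (u i) * ((⌊(ν : ℝ) * |u i| / ‖u‖⌋ + 1) / ν))
          + ENNReal.ofReal (1 - ((ν : ℝ) * |u i| / ‖u‖ - ⌊(ν : ℝ) * |u i| / ‖u‖⌋))
            • Measure.dirac
              (‖u‖ * Real.sign (u i) * (⌊(ν : ℝ) * |u i| / ‖u‖⌋ / ν))) :
    (∫ ω, X ω ∂μ) = u ∧
    (∫ ω, ‖X ω - u‖ ^ 2 ∂μ) = ∑ i : Fin d, ∫ ω, (X ω i - u i) ^ 2 ∂μ ∧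
    ∑ i : Fin d, ∫ ω, (X ω i - u i) ^ 2 ∂μ
      ≤ (r : ℝ) * ‖u‖ ^ 2 / (4 * (ν : ℝ) ^ 2) := by
  have hs : 0 < ‖u‖ := norm_pos_iff.mpr hu
  have hmeas : ∀ i : Fin d, Measurable fun ω => X ω i :=
    fun i => (measurable_pi_apply i).comp ((WithLp.measurable_ofLp _ _).comp hX)
  have key : ∀ i : Fin d,
      Integrable (fun ω => X ω i) μ ∧ (∫ ω, X ω i ∂μ) = u i ∧
      Integrable (fun ω => (X ω i - u i) ^ 2) μ ∧
      (u i = 0 → (∫ ω, (X ω i - u i) ^ 2 ∂μ) = 0) ∧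
      (∫ ω, (X ω i - u i) ^ 2 ∂μ) ≤ ‖u‖ ^ 2 / (4 * (ν : ℝ) ^ 2) := by
    intro i
    by_cases hui : u i = 0
    · have h0 : (fun ω => X ω i) =ᵐ[μ] fun _ => 0 := hzero i hui
      have h2 : (fun ω => (X ω i - u i) ^ 2) =ᵐ[μ] fun _ => 0 := by
        filter_upwards [h0] with ω hω; simp [hω, hui]
      have h4 : (∫ ω, X ω i ∂μ) = 0 := by rw [integral_congr_ae h0]; simp
      have h5 : (∫ ω, (X ω i - u i) ^ 2 ∂μ) = 0 := by rw [integral_congr_ae h2]; simp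
      exact ⟨(integrable_const 0).congr h0.symm, by rw [h4, hui],
        (integrable_const 0).congr h2.symm, fun _ => h5, by rw [h5]; positivity⟩
    · obtain ⟨hI1, hE1, hI2, hE2⟩ := rq_coord hν hs hui μ _ (hmeas i) (hlaw i hui)
      exact ⟨hI1, hE1, hI2, fun h => absurd h hui, hE2⟩
  refine ⟨?_, ?_, ?_⟩
  · have hXd : ∀ ω, X ω = ∑ i, X ω i • EuclideanSpace.single i (1 : ℝ) :=
      fun ω => (rq_decomp (X ω)).symm
    calc (∫ ω, X ω ∂μ) = ∫ ω, ∑ i, X ω i • EuclideanSpace.single i (1 : ℝ) ∂μ := by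
          simp_rw [← hXd]
      _ = ∑ i, ∫ ω, X ω i • EuclideanSpace.single i (1 : ℝ) ∂μ :=
          integral_finset_sum _ (fun i _ => (key i).1.smul_const _)
      _ = ∑ i, (∫ ω, X ω i ∂μ) • EuclideanSpace.single i (1 : ℝ) := by
          simp_rw [integral_smul_const]
      _ = ∑ i, u i • EuclideanSpace.single i (1 : ℝ) := by
          refine Finset.sum_congr rfl fun i _ => ?_
          rw [(key i).2.1]
      _ = u := rq_decomp u
  · have hnorm : ∀ ω, ‖X ω - u‖ ^ 2 = ∑ i, (X ω i - u i) ^ 2 := by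
      intro ω
      rw [EuclideanSpace.norm_eq, Real.sq_sqrt (by positivity)]
      refine Finset.sum_congr rfl fun i _ => ?_
      rw [PiLp.sub_apply, Real.norm_eq_abs, sq_abs]
    calc (∫ ω, ‖X ω - u‖ ^ 2 ∂μ) = ∫ ω, ∑ i, (X ω i - u i) ^ 2 ∂μ := by
          simp_rw [hnorm]
      _ = ∑ i, ∫ ω, (X ω i - u i) ^ 2 ∂μ :=
          integral_finset_sum _ (fun i _ => (key i).2.2.1)
  · set B := ‖u‖ ^ 2 / (4 * (ν : ℝ) ^ 2) with hB
    have hB0 : 0 ≤ B := by positivity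
    have hsum : ∑ i : Fin d, ∫ ω, (X ω i - u i) ^ 2 ∂μ
        = ∑ i ∈ Finset.univ.filter (fun i => u i ≠ 0), ∫ ω, (X ω i - u i) ^ 2 ∂μ := by
      refine (Finset.sum_filter_of_ne fun i _ hne => ?_).symm
      intro h0
      exact hne ((key i).2.2.2.1 h0)
    rw [hsum]
    calc ∑ i ∈ Finset.univ.filter (fun i => u i ≠ 0), ∫ ω, (X ω i - u i) ^ 2 ∂μ
        ≤ (Finset.univ.filter (fun i => u i ≠ 0)).card • B :=
          Finset.sum_le_card_nsmul _ _ B (fun i _ => (key i).2.2.2.2)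
      _ = ((Finset.univ.filter (fun i => u i ≠ 0)).card : ℝ) * B := nsmul_eq_mul _ _
      _ ≤ (r : ℝ) * B := by
          exact mul_le_mul_of_nonneg_right (by exact_mod_cast hsparse) hB0
      _ = (r : ℝ) * ‖u‖ ^ 2 / (4 * (ν : ℝ) ^ 2) := by rw [hB]; ring
end
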